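/- Let G and H be topological groups, U ⊆ G and V ⊆ H open subsets, and E a locally convex space. Assume that U × V and U × V × 𝔏(G) are k_ℝ-spaces. Then the map f ↦ f^∨, where f^∨(x) := f(x,·), is a bijection from the set of C^{1,0}-maps U × V → E onto the set of C¹-maps U → C(V,E) (with C(V,E) carrying the compact-open topology); in particular, for every C¹-map g : U → C(V,E), the map g^∧ : U × V → E, (x,y) ↦ g(x)(y), is C^{1,0}. -/

import Mathlib

open Filter Topology Set

/-- The set of continuous one-parameter subgroups `γ : (ℝ,+) → G`, as a subtype of `C(ℝ, G)`
(hence endowed with the compact-open topology). -/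
abbrev OneParam (G : Type*) [TopologicalSpace G] [Group G] : Type _ :=
  {γ : C(ℝ, G) // ∀ s t : ℝ, γ (s + t) = γ s * γ t}

/-- `D_γ f(x) = v`, i.e. `(1/t)(f(x·γ(t)) − f(x)) → v` as `t → 0` (for maps into any
Hausdorff topological `ℝ`-vector space, such as `C(V,E)` with the compact-open topology). -/
def HasDirDeriv {G E : Type*} [TopologicalSpace G] [Group G]
    [AddCommGroup E] [Module ℝ E] [TopologicalSpace E]
    (f : G → E) (x : G) (γ : OneParam G) (v : E) : Prop :=
  Tendsto (fun t : ℝ => t⁻¹ • (f (x * γ.1 t) - f x)) (𝓝[≠] (0 : ℝ)) (𝓝 v)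

/-- `g` is a `C¹`-map on `U` (into a topological vector space). -/
def IsC1 {G F : Type*} [TopologicalSpace G] [Group G]
    [AddCommGroup F] [Module ℝ F] [TopologicalSpace F]
    (g : G → F) (U : Set G) : Prop :=
  ContinuousOn g U ∧
  ∃ dg : G → OneParam G → F,
    (∀ x ∈ U, ∀ γ : OneParam G, HasDirDeriv g x γ (dg x γ)) ∧
    ContinuousOn (fun p : G × OneParam G => dg p.1 p.2) (U ×ˢ (univ : Set (OneParam G)))

/-- `f` is a `C^{1,0}`-map on `U × V`. -/
def IsC10 {G H E : Type*} [TopologicalSpace G] [Group G] [TopologicalSpace H]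
    [AddCommGroup E] [Module ℝ E] [TopologicalSpace E]
    (f : G → H → E) (U : Set G) (V : Set H) : Prop :=
  ContinuousOn (fun p : G × H => f p.1 p.2) (U ×ˢ V) ∧
  ∃ d10 : G → H → OneParam G → E,
    (∀ x ∈ U, ∀ y ∈ V, ∀ γ : OneParam G,
      HasDirDeriv (fun x' => f x' y) x γ (d10 x y γ)) ∧
    ContinuousOn (fun p : G × H × OneParam G => d10 p.1 p.2.1 p.2.2)
      (U ×ˢ V ×ˢ (univ : Set (OneParam G)))

/-- `X` is a `k_ℝ`-space: every real-valued function which is continuous on all compact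
subsets is continuous. -/
def IsKR (X : Type*) [TopologicalSpace X] : Prop :=
  ∀ h : X → ℝ, (∀ K : Set X, IsCompact K → ContinuousOn h K) → Continuous h

section AuxLemmas
variable {E : Type*} [AddCommGroup E] [Module ℝ E] [TopologicalSpace E]
  [IsTopologicalAddGroup E] [ContinuousSMul ℝ E] [LocallyConvexSpace ℝ E]

/-- A map into a LCS which is continuous on compact subsets of a `k_ℝ`-space is continuous. -/
theorem kr_continuous {X : Type*} [TopologicalSpace X] (hX : IsKR X)
    {Θ : X → E} (h : ∀ K : Set X, IsCompact K → ContinuousOn Θ K) : Continuous Θ := by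
  rw [continuous_iff_continuousAt]
  intro x₀ s hs
  have hpre : (fun e => Θ x₀ + e) ⁻¹' s ∈ 𝓝 (0:E) := by
    have : ContinuousAt (fun e : E => Θ x₀ + e) 0 :=
      (continuous_const.add continuous_id).continuousAt
    have h0 : (fun e : E => Θ x₀ + e) 0 = Θ x₀ := by simp
    exact this (by rw [h0]; exact hs)
  obtain ⟨W, ⟨hWn, hWc⟩, hWsub⟩ :=
    (LocallyConvexSpace.convex_basis_zero ℝ E).mem_iff.mp hpre
  set φ : X → ℝ := fun x => gauge W (Θ x - Θ x₀) with hφ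
  have hφc : Continuous φ := by
    apply hX
    intro K hK
    exact (continuous_gauge hWc hWn).comp_continuousOn ((h K hK).sub continuousOn_const)
  have hmem : {x | φ x < 1} ∈ 𝓝 x₀ := by
    refine (isOpen_lt hφc continuous_const).mem_nhds ?_
    simp [hφ, gauge_zero]
  refine mem_map.mpr (mem_of_superset hmem fun x hx => ?_)
  have : Θ x - Θ x₀ ∈ W :=
    gauge_lt_one_subset_self hWc (mem_of_mem_nhds hWn) (absorbent_nhds_zero hWn) hx
  have := hWsub this
  simpa using this

/-- Evaluation of a continuous family of continuous maps is continuous on a `k_ℝ`-space. -/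
theorem kr_continuous_eval {X Y : Type*} [TopologicalSpace X] [TopologicalSpace Y]
    [RegularSpace Y] (hX : IsKR X) {h : X → C(Y, E)} (hh : Continuous h)
    {k : X → Y} (hk : Continuous k) : Continuous fun x => h x (k x) := by
  apply kr_continuous hX
  intro K hK
  rw [continuousOn_iff_continuous_restrict]
  have hL : IsCompact (k '' K) := hK.image hk
  haveI : CompactSpace ↥(k '' K) := isCompact_iff_compactSpace.mp hL
  have h1 : Continuous fun x : ↥K => ((h x.1).restrict (k '' K)) :=
    (ContinuousMap.continuous_restrict _).comp (hh.comp continuous_subtype_val)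
  have h2 : Continuous fun x : ↥K => (⟨k x.1, mem_image_of_mem k x.2⟩ : ↥(k '' K)) :=
    Continuous.subtype_mk (hk.comp continuous_subtype_val) _
  exact h1.eval h2

/-- Mean value theorem in a locally convex space. -/
theorem mvt_convex {c d : ℝ → E} {W : Set E} (hWc : Convex ℝ W) (hWcl : IsClosed W)
    (hc : ContinuousOn c (Icc 0 1))
    (hd : ∀ s ∈ Ioo (0:ℝ) 1,
      Tendsto (fun h : ℝ => h⁻¹ • (c (s + h) - c s)) (𝓝[≠] 0) (𝓝 (d s)))
    (hdW : ∀ s ∈ Ioo (0:ℝ) 1, d s ∈ W) : c 1 - c 0 ∈ W := by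
  by_contra hmem
  obtain ⟨φ, u, hu, hW⟩ := geometric_hahn_banach_point_closed hWc hWcl hmem
  have key : ∀ s ∈ Ioo (0:ℝ) 1, HasDerivAt (fun t => φ (c t)) (φ (d s)) s := by
    intro s hs
    rw [hasDerivAt_iff_tendsto_slope_zero]
    have := (φ.continuous.tendsto (d s)).comp (hd s hs)
    refine this.congr fun h => ?_
    simp [Function.comp, map_sub, map_smul]
  obtain ⟨ξ, hξ, hξ'⟩ := exists_hasDerivAt_eq_slope (fun t => φ (c t)) (fun s => φ (d s))
      one_pos (φ.continuous.comp_continuousOn hc) key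
  have h2 := hW (d ξ) (hdW ξ hξ)
  rw [hξ'] at h2
  rw [map_sub] at hu
  simp at h2
  linarith

end AuxLemmas

theorem oneParam_zero {G : Type*} [TopologicalSpace G] [Group G] (γ : OneParam G) :
    γ.1 0 = 1 := by
  have h := γ.2 0 0
  rw [add_zero] at h
  exact (left_eq_mul.mp h)

open scoped Classical in
noncomputable def gOf {G H E : Type*} [TopologicalSpace H] [AddCommGroup E]
    [TopologicalSpace E] [IsTopologicalAddGroup E] (f : G → H → E) (V : Set H) :
    G → C(↥V, E) := fun x =>
  if h : Continuous fun v : ↥V => f x v.1 then ⟨_, h⟩ else 0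

section Fwd
variable {G H E : Type*} [Group G] [TopologicalSpace G] [IsTopologicalGroup G]
    [Group H] [TopologicalSpace H] [IsTopologicalGroup H]
    [AddCommGroup E] [Module ℝ E] [TopologicalSpace E] [IsTopologicalAddGroup E]
    [ContinuousSMul ℝ E] [LocallyConvexSpace ℝ E]
    {f : G → H → E} {U : Set G} {V : Set H}

theorem slice_cont (hfc : ContinuousOn (fun p : G × H => f p.1 p.2) (U ×ˢ V))
    {x : G} (hx : x ∈ U) : Continuous fun v : ↥V => f x v.1 :=
  hfc.comp_continuous (continuous_const.prodMk continuous_subtype_val)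
    fun v => mk_mem_prod hx v.2

theorem gOf_eq (hfc : ContinuousOn (fun p : G × H => f p.1 p.2) (U ×ˢ V))
    {x : G} (hx : x ∈ U) (v : ↥V) : gOf f V x v = f x v.1 := by
  rw [gOf, dif_pos (slice_cont hfc hx)]
  rfl

theorem isC1_gOf (hU : IsOpen U) (hV : IsOpen V) (hf : IsC10 f U V) :
    IsC1 (gOf f V) U := by
  classical
  obtain ⟨hfc, d10, hd10, hd10c⟩ := hf
  have hopen : IsOpen (U ×ˢ V ×ˢ (univ : Set (OneParam G))) :=
    hU.prod (hV.prod isOpen_univ)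
  have hslice10 : ∀ x ∈ U, ∀ γ : OneParam G, Continuous fun v : ↥V => d10 x v.1 γ := by
    intro x hx γ
    exact hd10c.comp_continuous
      (continuous_const.prodMk (continuous_subtype_val.prodMk continuous_const))
      fun v => ⟨hx, v.2, mem_univ _⟩
  refine ⟨?_, fun x γ =>
      if h : Continuous fun v : ↥V => d10 x v.1 γ then ⟨_, h⟩ else 0, ?_, ?_⟩
  · -- continuity of gOf f V on U
    rw [continuousOn_iff_continuous_restrict]
    have hFc : Continuous fun q : ↥U × ↥V => f q.1.1 q.2.1 :=
      hfc.comp_continuous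
        ((continuous_subtype_val.comp continuous_fst).prodMk
          (continuous_subtype_val.comp continuous_snd))
        fun q => mk_mem_prod q.1.2 q.2.2
    have := (ContinuousMap.curry ⟨_, hFc⟩).continuous
    refine this.congr fun u => ?_
    ext v
    simp [ContinuousMap.curry, gOf_eq hfc u.2]
  · -- directional derivatives
    intro x hx γ
    have hγ0 : γ.1 0 = 1 := oneParam_zero γ
    rw [HasDirDeriv]
    beta_reduce
    rw [dif_pos (hslice10 x hx γ)]
    rw [ContinuousMap.tendsto_nhds_compactOpen]
    intro K hK O hO hmaps
    set dgx : C(↥V, E) := ⟨_, hslice10 x hx γ⟩ with hdgx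
    obtain ⟨W, hW, hKW⟩ := compact_open_separated_add_right
      (hK.image dgx.continuous) hO hmaps.image_subset
    obtain ⟨W₁, hW₁n, hW₁cl, hW₁sub⟩ := exists_mem_nhds_isClosed_subset hW
    obtain ⟨W₂, ⟨hW₂n, hW₂c⟩, hW₂sub⟩ :=
      (LocallyConvexSpace.convex_basis_zero ℝ E).mem_iff.mp hW₁n
    have hCc : Convex ℝ (closure W₂) := hW₂c.closure
    have hCW : closure W₂ ⊆ W := (closure_minimal hW₂sub hW₁cl).trans hW₁sub
    have hIccK : IsCompact ((Icc (0:ℝ) 1) ×ˢ K) := isCompact_Icc.prod hK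
    have hEv : ∀ᶠ t in 𝓝 (0:ℝ), ∀ q ∈ (Icc (0:ℝ) 1) ×ˢ K,
        x * γ.1 (q.1 * t) ∈ U ∧
          d10 (x * γ.1 (q.1 * t)) q.2.1 γ - d10 x q.2.1 γ ∈ W₂ := by
      apply hIccK.eventually_forall_of_forall_eventually
      rintro ⟨s, v⟩ ⟨hs, hvK⟩
      have hptG : Continuous fun z : ℝ × ℝ × ↥V => x * γ.1 (z.2.1 * z.1) :=
        continuous_const.mul (γ.1.continuous.comp
          ((continuous_fst.comp continuous_snd).mul continuous_fst))
      have T0 : Tendsto (fun z : ℝ × ℝ × ↥V => x * γ.1 (z.2.1 * z.1))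
          (𝓝 ((0:ℝ), (s, v))) (𝓝 x) := by
        have h := hptG.continuousAt (x := ((0:ℝ), (s, v)))
        unfold ContinuousAt at h
        simpa [hγ0] using h
      have T1 : Tendsto (fun z : ℝ × ℝ × ↥V => d10 (x * γ.1 (z.2.1 * z.1)) z.2.2.1 γ)
          (𝓝 ((0:ℝ), (s, v))) (𝓝 (d10 x v.1 γ)) := by
        have hca : ContinuousAt (fun p : G × H × OneParam G => d10 p.1 p.2.1 p.2.2)
            (x, ((v : H), γ)) :=
          hd10c.continuousAt (hopen.mem_nhds ⟨hx, v.2, mem_univ _⟩)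
        exact hca.tendsto.comp
          (T0.prodMk_nhds (((continuous_subtype_val.comp
            (continuous_snd.comp continuous_snd)).prodMk
              continuous_const).continuousAt.tendsto))
      have T2 : Tendsto (fun z : ℝ × ℝ × ↥V => d10 x z.2.2.1 γ)
          (𝓝 ((0:ℝ), (s, v))) (𝓝 (d10 x v.1 γ)) := by
        have hca : ContinuousAt (fun p : G × H × OneParam G => d10 p.1 p.2.1 p.2.2)
            (x, ((v : H), γ)) :=
          hd10c.continuousAt (hopen.mem_nhds ⟨hx, v.2, mem_univ _⟩)
        exact hca.tendsto.comp
          ((continuous_const.prodMk ((continuous_subtype_val.comp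
            (continuous_snd.comp continuous_snd)).prodMk
              continuous_const)).continuousAt (x := ((0:ℝ), (s, v)))).tendsto
      have TΘ : Tendsto (fun z : ℝ × ℝ × ↥V =>
            d10 (x * γ.1 (z.2.1 * z.1)) z.2.2.1 γ - d10 x z.2.2.1 γ)
          (𝓝 ((0:ℝ), (s, v))) (𝓝 0) := by
        have := T1.sub T2
        simpa using this
      have e1 : ∀ᶠ z : ℝ × ℝ × ↥V in 𝓝 ((0:ℝ), (s, v)), x * γ.1 (z.2.1 * z.1) ∈ U :=
        T0.eventually_mem (hU.mem_nhds hx)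
      have e2 : ∀ᶠ z : ℝ × ℝ × ↥V in 𝓝 ((0:ℝ), (s, v)),
          d10 (x * γ.1 (z.2.1 * z.1)) z.2.2.1 γ - d10 x z.2.2.1 γ ∈ W₂ :=
        TΘ.eventually_mem hW₂n
      filter_upwards [e1, e2] with z h1 h2
      exact ⟨h1, h2⟩
    filter_upwards [hEv.filter_mono nhdsWithin_le_nhds, self_mem_nhdsWithin]
      with t hP (ht : t ≠ 0)
    intro v hv
    have hxt : x * γ.1 t ∈ U := by
      have := (hP (1, v) ⟨⟨zero_le_one, le_refl 1⟩, hv⟩).1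
      simpa using this
    set D : E := d10 x v.1 γ with hD
    set c : ℝ → E := fun s => t⁻¹ • f (x * γ.1 (s * t)) v.1 - s • D with hc
    have hcont : ContinuousOn c (Icc 0 1) := by
      have hFcont : ContinuousOn (fun s : ℝ => f (x * γ.1 (s * t)) v.1) (Icc 0 1) := by
        intro s hs
        have hsU : x * γ.1 (s * t) ∈ U := (hP (s, v) ⟨hs, hv⟩).1
        have hca := hfc.continuousAt ((hU.prod hV).mem_nhds (mk_mem_prod hsU v.2))
        have hinner : Tendsto (fun r : ℝ => ((x * γ.1 (r * t), (v : H)) : G × H)) (𝓝 s)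
            (𝓝 ((x * γ.1 (s * t), (v : H)))) :=
          ((continuous_const.mul (γ.1.continuous.comp
            (continuous_id.mul continuous_const))).prodMk continuous_const).continuousAt
        exact ContinuousAt.continuousWithinAt (Filter.Tendsto.comp hca hinner)
      exact (continuousOn_const.smul hFcont).sub (continuousOn_id.smul continuousOn_const)
    have hderiv : ∀ s ∈ Ioo (0:ℝ) 1,
        Tendsto (fun h : ℝ => h⁻¹ • (c (s + h) - c s)) (𝓝[≠] 0)
          (𝓝 (d10 (x * γ.1 (s * t)) v.1 γ - D)) := by
      intro s hs
      have hsU : x * γ.1 (s * t) ∈ U := (hP (s, v) ⟨Ioo_subset_Icc_self hs, hv⟩).1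
      have base := hd10 _ hsU v.1 v.2 γ
      have hmul : Tendsto (fun h : ℝ => h * t) (𝓝[≠] 0) (𝓝[≠] 0) := by
        rw [tendsto_nhdsWithin_iff]
        constructor
        · have h2 : Tendsto (fun h : ℝ => h * t) (𝓝 0) (𝓝 (0 * t)) :=
            ((continuous_id.mul continuous_const).tendsto 0)
          simpa using h2.mono_left nhdsWithin_le_nhds
        · exact eventually_mem_nhdsWithin.mono fun h hh => mul_ne_zero hh ht
      have comp := (base.comp hmul).sub (tendsto_const_nhds (x := D))
      refine comp.congr' ?_
      filter_upwards [self_mem_nhdsWithin] with h (hh : h ≠ 0)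
      have hsplit : x * γ.1 ((s + h) * t) = (x * γ.1 (s * t)) * γ.1 (h * t) := by
        rw [add_mul, γ.2, mul_assoc]
      have hc1 : c (s + h) - c s =
          t⁻¹ • (f ((x * γ.1 (s * t)) * γ.1 (h * t)) v.1 - f (x * γ.1 (s * t)) v.1)
            - h • D := by
        simp only [hc, hsplit, smul_sub, add_smul]
        abel
      rw [hc1, smul_sub, smul_smul, smul_smul, inv_mul_cancel₀ hh, one_smul, ← mul_inv]
      rfl
    have hdW : ∀ s ∈ Ioo (0:ℝ) 1, d10 (x * γ.1 (s * t)) v.1 γ - D ∈ closure W₂ :=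
      fun s hs => subset_closure (hP (s, v) ⟨Ioo_subset_Icc_self hs, hv⟩).2
    have hkey : c 1 - c 0 ∈ closure W₂ :=
      mvt_convex hCc isClosed_closure hcont hderiv hdW
    have hc10 : c 1 - c 0 = t⁻¹ • (f (x * γ.1 t) v.1 - f x v.1) - D := by
      simp only [hc, one_mul, zero_mul, hγ0, mul_one, one_smul, zero_smul, sub_zero,
        smul_sub]
      abel
    have hval1 : (gOf f V (x * γ.1 t)) v = f (x * γ.1 t) v.1 := gOf_eq hfc hxt v
    have hval2 : (gOf f V x) v = f x v.1 := gOf_eq hfc hx v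
    have hfinal : (t⁻¹ • (gOf f V (x * γ.1 t) - gOf f V x)) v
        = dgx v + (c 1 - c 0) := by
      rw [ContinuousMap.smul_apply, ContinuousMap.sub_apply, hval1, hval2, hc10]
      have : dgx v = D := rfl
      rw [this]
      abel
    rw [hfinal]
    exact hKW (add_mem_add (mem_image_of_mem _ hv) (hCW hkey))
  · -- continuity of the differential
    rw [continuousOn_iff_continuous_restrict]
    have hDc : Continuous fun q : (↥U × OneParam G) × ↥V => d10 q.1.1.1 q.2.1 q.1.2 :=
      hd10c.comp_continuous
        ((continuous_subtype_val.comp (continuous_fst.comp continuous_fst)).prodMk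
          ((continuous_subtype_val.comp continuous_snd).prodMk
            (continuous_snd.comp continuous_fst)))
        fun q => ⟨q.1.1.2, q.2.2, mem_univ _⟩
    have hmapc : Continuous fun r : ↥(U ×ˢ (univ : Set (OneParam G))) =>
        ((⟨r.1.1, r.2.1⟩ : ↥U), r.1.2) :=
      (Continuous.subtype_mk (continuous_fst.comp continuous_subtype_val) _).prodMk
        (continuous_snd.comp continuous_subtype_val)
    refine ((ContinuousMap.curry ⟨_, hDc⟩).continuous.comp hmapc).congr fun r => ?_
    ext v
    simp only [Function.comp_apply, Set.restrict_apply, ContinuousMap.curry_apply,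
      ContinuousMap.coe_mk]
    beta_reduce
    rw [dif_pos (hslice10 r.1.1 r.2.1 r.1.2)]
    rfl
end Fwd


open scoped Classical in
/-- `g^∧`, extended by `0` outside `V`. -/
noncomputable def fOf {G H E : Type*} [TopologicalSpace H]
    [AddCommGroup E] [TopologicalSpace E] (V : Set H) (g : G → C(↥V, E)) : G → H → E :=
  fun x y => if h : y ∈ V then g x ⟨y, h⟩ else 0

theorem fOf_eq {G H E : Type*} [TopologicalSpace H]
    [AddCommGroup E] [TopologicalSpace E] (V : Set H) (g : G → C(↥V, E))
    (x : G) (v : ↥V) : fOf V g x v.1 = g x v := by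
  rw [fOf, dif_pos v.2]

section Bwd
variable {G H E : Type*} [Group G] [TopologicalSpace G] [IsTopologicalGroup G]
    [Group H] [TopologicalSpace H] [IsTopologicalGroup H]
    [AddCommGroup E] [Module ℝ E] [TopologicalSpace E] [IsTopologicalAddGroup E]
    [ContinuousSMul ℝ E] [LocallyConvexSpace ℝ E]
    {U : Set G} {V : Set H}

theorem isC10_fOf (hU : IsOpen U) (hV : IsOpen V)
    (hkr1 : IsKR (↥U × ↥V)) (hkr2 : IsKR (↥U × ↥V × OneParam G))
    {g : G → C(↥V, E)} (hg : IsC1 g U) : IsC10 (fOf V g) U V := by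
  classical
  obtain ⟨hgc, dg, hdg, hdgc⟩ := hg
  constructor
  · -- joint continuity, via the k_ℝ property of U × V
    rw [continuousOn_iff_continuous_restrict]
    have hgsub : Continuous fun u : ↥U => g u.1 :=
      continuousOn_iff_continuous_restrict.mp hgc
    have hΨ : Continuous fun p : ↥U × ↥V => (g p.1.1) p.2 :=
      kr_continuous_eval hkr1 (hgsub.comp continuous_fst) continuous_snd
    have hmap : Continuous fun r : ↥(U ×ˢ V) =>
        (((⟨r.1.1, r.2.1⟩ : ↥U), (⟨r.1.2, r.2.2⟩ : ↥V)) : ↥U × ↥V) :=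
      (Continuous.subtype_mk (continuous_fst.comp continuous_subtype_val) _).prodMk
        (Continuous.subtype_mk (continuous_snd.comp continuous_subtype_val) _)
    refine (hΨ.comp hmap).congr fun r => ?_
    simp only [Function.comp_apply, Set.restrict_apply]
    exact (fOf_eq V g r.1.1 ⟨r.1.2, r.2.2⟩).symm
  · refine ⟨fun x y γ => if h : y ∈ V then dg x γ ⟨y, h⟩ else 0, ?_, ?_⟩
    · -- pointwise directional derivatives
      intro x hx y hy γ
      rw [HasDirDeriv]
      beta_reduce
      rw [dif_pos hy]
      have base := hdg x hx γ
      have hev : Continuous fun q : C(↥V, E) => q ⟨y, hy⟩ := continuous_eval_const _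
      have T := (hev.tendsto (dg x γ)).comp base
      refine T.congr fun t => ?_
      simp only [Function.comp_apply, ContinuousMap.smul_apply, ContinuousMap.sub_apply]
      simp only [fOf, dif_pos hy]
    · -- continuity of the partial differential, via the k_ℝ property
      rw [continuousOn_iff_continuous_restrict]
      have hdgsub : Continuous fun q : ↥U × OneParam G => dg q.1.1 q.2 :=
        hdgc.comp_continuous
          ((continuous_subtype_val.comp continuous_fst).prodMk continuous_snd)
          fun q => ⟨q.1.2, mem_univ _⟩
      have hΨ : Continuous fun p : ↥U × ↥V × OneParam G => (dg p.1.1 p.2.2) p.2.1 :=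
        kr_continuous_eval hkr2
          (hdgsub.comp (continuous_fst.prodMk (continuous_snd.comp continuous_snd)))
          (continuous_fst.comp continuous_snd)
      have hmap : Continuous fun r : ↥(U ×ˢ V ×ˢ (univ : Set (OneParam G))) =>
          (((⟨r.1.1, r.2.1⟩ : ↥U), ((⟨r.1.2.1, r.2.2.1⟩ : ↥V), r.1.2.2))
            : ↥U × ↥V × OneParam G) :=
        (Continuous.subtype_mk (continuous_fst.comp continuous_subtype_val) _).prodMk
          ((Continuous.subtype_mk
            ((continuous_fst.comp continuous_snd).comp continuous_subtype_val) _).prodMk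
            ((continuous_snd.comp continuous_snd).comp continuous_subtype_val))
      refine (hΨ.comp hmap).congr fun r => ?_
      simp only [Function.comp_apply, Set.restrict_apply]
      beta_reduce
      rw [dif_pos r.2.2.1]

end Bwd


open scoped Classical in
/-- The map `F ↦ F^∨` on functions `U × V → E`, with values in functions `U → C(V,E)`
(defined to be `0` where the slice is not continuous). -/
noncomputable def Phi {G H E : Type*} [TopologicalSpace G] [TopologicalSpace H]
    [AddCommGroup E] [TopologicalSpace E] [IsTopologicalAddGroup E]
    {U : Set G} {V : Set H} (F : ↥U × ↥V → E) : ↥U → C(↥V, E) := fun u =>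
  if h : Continuous fun v : ↥V => F (u, v) then ⟨fun v => F (u, v), h⟩ else 0

/-- If `U × V` and `U × V × 𝔏(G)` are `k_ℝ`-spaces, then `f ↦ f^∨` is a
bijection from the set of `C^{1,0}`-maps `U × V → E` onto the set of `C¹`-maps
`U → C(V,E)`; in particular, for every `C¹`-map `g : U → C(V,E)` the map
`g^∧ : U × V → E`, `(x,y) ↦ g(x)(y)`, is `C^{1,0}`. -/
theorem exp_law_C10_of_kR
    {G H E : Type*} [Group G] [TopologicalSpace G] [IsTopologicalGroup G]
    [Group H] [TopologicalSpace H] [IsTopologicalGroup H]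
    [AddCommGroup E] [Module ℝ E] [TopologicalSpace E] [IsTopologicalAddGroup E]
    [ContinuousSMul ℝ E] [LocallyConvexSpace ℝ E] [T2Space E]
    (U : Set G) (V : Set H) (hU : IsOpen U) (hV : IsOpen V)
    (hkr1 : IsKR (↥U × ↥V)) (hkr2 : IsKR (↥U × ↥V × OneParam G)) :
    Set.BijOn (Phi (E := E) (U := U) (V := V))
      {F : ↥U × ↥V → E | ∃ f : G → H → E,
        IsC10 f U V ∧ ∀ p : ↥U × ↥V, F p = f p.1.1 p.2.1}
      {Γ : ↥U → C(↥V, E) | ∃ g : G → C(↥V, E),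
        IsC1 g U ∧ ∀ u : ↥U, Γ u = g u.1} ∧
    (∀ g : G → C(↥V, E), IsC1 g U →
      ∃ f : G → H → E, IsC10 f U V ∧ ∀ x ∈ U, ∀ v : ↥V, f x v.1 = g x v) := by
  classical
  have hBwd : ∀ g : G → C(↥V, E), IsC1 g U →
      ∃ f : G → H → E, IsC10 f U V ∧ ∀ x ∈ U, ∀ v : ↥V, f x v.1 = g x v :=
    fun g hg => ⟨fOf V g, isC10_fOf hU hV hkr1 hkr2 hg, fun x _ v => fOf_eq V g x v⟩
  refine ⟨⟨?_, ?_, ?_⟩, hBwd⟩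
  · -- MapsTo
    rintro F ⟨f, hf, hF⟩
    refine ⟨gOf f V, isC1_gOf hU hV hf, fun u => ?_⟩
    have hfun : (fun v : ↥V => F (u, v)) = fun v : ↥V => f u.1 v.1 :=
      funext fun v => hF (u, v)
    simp only [Phi, gOf, hfun]
  · -- InjOn
    rintro F₁ ⟨f₁, hf₁, hF₁⟩ F₂ ⟨f₂, hf₂, hF₂⟩ heq
    funext p
    obtain ⟨u, v⟩ := p
    have h₁ : Continuous fun v : ↥V => F₁ (u, v) := by
      have : (fun v : ↥V => F₁ (u, v)) = fun v : ↥V => f₁ u.1 v.1 :=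
        funext fun v => hF₁ (u, v)
      rw [this]; exact slice_cont hf₁.1 u.2
    have h₂ : Continuous fun v : ↥V => F₂ (u, v) := by
      have : (fun v : ↥V => F₂ (u, v)) = fun v : ↥V => f₂ u.1 v.1 :=
        funext fun v => hF₂ (u, v)
      rw [this]; exact slice_cont hf₂.1 u.2
    have e1 : (Phi (E := E) F₁) u v = F₁ (u, v) := by
      simp only [Phi]; rw [dif_pos h₁]; rfl
    have e2 : (Phi (E := E) F₂) u v = F₂ (u, v) := by
      simp only [Phi]; rw [dif_pos h₂]; rfl
    rw [← e1, ← e2, heq]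
  · -- SurjOn
    rintro Γ ⟨g, hg, hΓ⟩
    obtain ⟨f, hf, hfg⟩ := hBwd g hg
    refine ⟨fun p => f p.1.1 p.2.1, ⟨f, hf, fun p => rfl⟩, ?_⟩
    funext u
    have hcont : Continuous fun v : ↥V => f u.1 v.1 := by
      have : (fun v : ↥V => f u.1 v.1) = fun v : ↥V => g u.1 v :=
        funext fun v => hfg u.1 u.2 v
      rw [this]; exact (g u.1).continuous
    simp only [Phi]
    rw [dif_pos hcont]
    ext v
    rw [hΓ]
    exact hfg u.1 u.2 v
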